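/- arXiv:2512.21463 — 2 statements merged into one kernel-verified Lean document; each statement's English description precedes it below -/
import Mathlib

section
/- Fix real numbers l and d with d > 0. Let z = tanh l + i·sech l and w = e^d·z be points of the upper half-plane. Then cosh(dist(z, w)) = 1 + 2·sinh²(d/2)·cosh² l; equivalently cosh²(dist(z,w)/2) = cosh²(d/2) + sinh² l · sinh²(d/2). In particular, the distance is minimized exactly at l = 0, where it equals d. -/
open Real Complex

theorem stmt_13 (l d : ℝ) (hd : 0 < d) (z w : UpperHalfPlane)
    (hz : (z : ℂ) = Real.tanh l + (Real.cosh l)⁻¹ * Complex.I)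
    (hw : (w : ℂ) = Real.exp d * (z : ℂ)) :
    Real.cosh (dist z w) = 1 + 2 * Real.sinh (d/2) ^ 2 * Real.cosh l ^ 2 ∧
    Real.cosh (dist z w / 2) ^ 2 =
      Real.cosh (d/2) ^ 2 + Real.sinh l ^ 2 * Real.sinh (d/2) ^ 2 ∧
    d ≤ dist z w ∧ (dist z w = d ↔ l = 0) := by
  have hc : (0:ℝ) < Real.cosh l := Real.cosh_pos l
  have hc1 : (1:ℝ) ≤ Real.cosh l := Real.one_le_cosh l
  have hsc : Real.sinh l ^ 2 + 1 = Real.cosh l ^ 2 := (Real.cosh_sq l).symm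
  have hzim : z.im = (Real.cosh l)⁻¹ := by
    rw [← UpperHalfPlane.coe_im, hz]
    simp only [Complex.add_im, Complex.ofReal_im, Complex.mul_im, Complex.I_im,
      Complex.I_re, Complex.ofReal_re, mul_one, mul_zero, zero_add, add_zero]
  have hwim : w.im = Real.exp d * (Real.cosh l)⁻¹ := by
    rw [← UpperHalfPlane.coe_im, hw]
    simp only [Complex.mul_im, Complex.ofReal_re, Complex.ofReal_im, zero_mul, add_zero]
    rw [UpperHalfPlane.coe_im, hzim]
  have habs : ‖(z:ℂ)‖ = 1 := by
    rw [hz]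
    have h2 : ‖(↑(Real.tanh l) + ↑(Real.cosh l)⁻¹ * Complex.I : ℂ)‖ ^ 2 = 1 := by
      rw [← Complex.normSq_eq_norm_sq]
      simp only [Complex.normSq_apply, Complex.add_re, Complex.ofReal_re,
        Complex.mul_re, Complex.I_re, Complex.I_im, Complex.ofReal_im,
        Complex.add_im, Complex.mul_im, mul_zero, mul_one, zero_add, add_zero,
        zero_mul, sub_zero]
      rw [Real.tanh_eq_sinh_div_cosh]
      field_simp
      nlinarith
    nlinarith [norm_nonneg ((Real.tanh l : ℂ) + (Real.cosh l)⁻¹ * Complex.I)]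
  have he1 : (1:ℝ) < Real.exp d := by
    simpa using Real.exp_lt_exp.mpr hd
  have hdistc : dist (z:ℂ) (w:ℂ) = Real.exp d - 1 := by
    rw [Complex.dist_eq, hw]
    have h3 : (z:ℂ) - Real.exp d * (z:ℂ) = ((1 - Real.exp d : ℝ) : ℂ) * (z:ℂ) := by
      push_cast; ring
    rw [h3, norm_mul, habs, mul_one, Complex.norm_real, Real.norm_eq_abs, abs_of_nonpos (by linarith)]
    ring
  have hexp : Real.exp (d/2) * Real.exp (d/2) = Real.exp d := by
    rw [← Real.exp_add]; norm_num
  have hexp' : (0:ℝ) < Real.exp (d/2) := Real.exp_pos _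
  have hkey : Real.sinh (d/2) ^ 2 * Real.exp d * 4 = (Real.exp d - 1) ^ 2 := by
    rw [Real.sinh_eq, Real.exp_neg, ← hexp]
    field_simp
    ring
  have hed : (0:ℝ) < Real.exp d := Real.exp_pos d
  have hmain : Real.cosh (dist z w) = 1 + 2 * Real.sinh (d/2) ^ 2 * Real.cosh l ^ 2 := by
    rw [UpperHalfPlane.cosh_dist, hdistc, hzim, hwim]
    field_simp
    nlinarith [hkey]
  have hsd : (0:ℝ) < Real.sinh (d/2) := Real.sinh_pos_iff.mpr (by linarith)
  have hcoshd : Real.cosh d = 1 + 2 * Real.sinh (d/2) ^ 2 := by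
    have h2 : Real.cosh (2 * (d/2)) = Real.cosh (d/2) ^ 2 + Real.sinh (d/2) ^ 2 :=
      Real.cosh_two_mul _
    rw [show 2 * (d/2) = d by ring] at h2
    rw [h2, Real.cosh_sq]; ring
  have hle : Real.cosh d ≤ Real.cosh (dist z w) := by
    rw [hmain, hcoshd]; nlinarith
  have hdled : d ≤ dist z w := by
    have h := Real.cosh_le_cosh.mp hle
    rw [abs_of_pos hd, _root_.abs_of_nonneg dist_nonneg] at h
    exact h
  refine ⟨hmain, ?_, hdled, ?_⟩
  · have h2 : Real.cosh (2 * (dist z w / 2)) =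
        Real.cosh (dist z w / 2) ^ 2 + Real.sinh (dist z w / 2) ^ 2 := Real.cosh_two_mul _
    rw [show 2 * (dist z w / 2) = dist z w by ring] at h2
    have h3 := Real.cosh_sq (dist z w / 2)
    have h4 := Real.cosh_sq (d / 2)
    linear_combination (-(1:ℝ)/2) * h2 + (1/2) * h3 + (1/2) * hmain - h4
      - Real.sinh (d/2) ^ 2 * hsc
  · constructor
    · intro h
      rw [h, hcoshd] at hmain
      have h0 : Real.sinh (d/2) ^ 2 * (Real.cosh l ^ 2 - 1) = 0 := by
        linear_combination (-(1:ℝ)/2) * hmain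
      have hcl : Real.cosh l ^ 2 - 1 = 0 :=
        (mul_eq_zero.mp h0).resolve_left (pow_ne_zero 2 hsd.ne')
      have hs2 : Real.sinh l ^ 2 = 0 := by linarith
      have hs0 : Real.sinh l = 0 := by
        exact pow_eq_zero_iff (two_ne_zero) |>.mp hs2
      exact Real.sinh_eq_zero.mp hs0
    · intro h
      subst h
      have heq : Real.cosh (dist z w) = Real.cosh d := by
        rw [hmain, hcoshd, Real.cosh_zero]; ring
      have ha : |dist z w| ≤ |d| := Real.cosh_le_cosh.mp heq.le
      rw [_root_.abs_of_nonneg dist_nonneg, abs_of_pos hd] at ha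
      linarith
end

section
/- Let r = 5^(1/4) − √(√5 − 1). Then 0 < r < 1 and cosh(4·artanh r) = (3 + √5)/2; equivalently 2·((1 + r²)/(1 − r²))² − 1 = (3 + √5)/2. -/
open Real

/-- Inverse hyperbolic tangent: `artanh x = (1/2) log ((1+x)/(1−x))` for `|x| < 1`. -/
noncomputable def artanh (x : ℝ) : ℝ := Real.log ((1 + x) / (1 - x)) / 2

theorem stmt_16 (r : ℝ) (hr : r = (5 : ℝ) ^ ((1:ℝ)/4) - Real.sqrt (Real.sqrt 5 - 1)) :
    0 < r ∧ r < 1 ∧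
    Real.cosh (4 * _root_.artanh r) = (3 + Real.sqrt 5) / 2 ∧
    2 * ((1 + r^2) / (1 - r^2)) ^ 2 - 1 = (3 + Real.sqrt 5) / 2 := by
  set s := Real.sqrt 5 with hs_def
  have hs0 : 0 < s := Real.sqrt_pos.2 (by norm_num)
  have hs : s ^ 2 = 5 := Real.sq_sqrt (by norm_num)
  have hs1 : 1 < s := by nlinarith
  set t := Real.sqrt (5 - s) with ht_def
  have ht2 : t ^ 2 = 5 - s := Real.sq_sqrt (by nlinarith)
  have ht0 : 0 < t := Real.sqrt_pos.2 (by nlinarith)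
  have hq : (5 : ℝ) ^ ((1:ℝ)/4) = Real.sqrt s := by
    rw [hs_def, show (1:ℝ)/4 = (1/2) * (1/2) by norm_num,
      Real.rpow_mul (by norm_num), Real.sqrt_eq_rpow, Real.sqrt_eq_rpow]
  have hr' : r = Real.sqrt s - Real.sqrt (s - 1) := by rw [hr, hq]
  have hqu : Real.sqrt s * Real.sqrt (s - 1) = t := by
    rw [← Real.sqrt_mul hs0.le]
    congr 1
    nlinarith
  have hr2 : r ^ 2 = 2 * s - 1 - 2 * t := by
    have h1 : Real.sqrt s ^ 2 = s := Real.sq_sqrt hs0.le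
    have h2 : Real.sqrt (s - 1) ^ 2 = s - 1 := Real.sq_sqrt (by linarith)
    have hexp : (Real.sqrt s - Real.sqrt (s - 1)) ^ 2 =
        Real.sqrt s ^ 2 + Real.sqrt (s - 1) ^ 2 - 2 * (Real.sqrt s * Real.sqrt (s - 1)) := by
      ring
    rw [hr', hexp, h1, h2, hqu]
    ring
  have hts : s - 1 < t := by nlinarith
  have hrpos : 0 < r := by
    rw [hr']
    have : Real.sqrt (s - 1) < Real.sqrt s := Real.sqrt_lt_sqrt (by linarith) (by linarith)
    linarith
  have hr1 : r < 1 := by nlinarith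
  have hden : 0 < 1 - r ^ 2 := by nlinarith
  have key : 2 * ((1 + r ^ 2) / (1 - r ^ 2)) ^ 2 - 1 = (3 + s) / 2 := by
    rw [hr2]
    have h2 : (1 : ℝ) - (2 * s - 1 - 2 * t) ≠ 0 := by nlinarith
    field_simp
    linear_combination (-4*s+8+8*t)*hs + (-4-4*s)*ht2
  refine ⟨hrpos, hr1, ?_, key⟩
  have hy : 0 < (1 + r) / (1 - r) := by
    apply div_pos <;> nlinarith
  have h4 : 4 * _root_.artanh r = Real.log (((1 + r) / (1 - r)) ^ 2) := by
    rw [_root_.artanh, Real.log_pow]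
    push_cast
    ring
  rw [h4, Real.cosh_log (by positivity), ← key]
  have h1r : (1 : ℝ) - r ≠ 0 := by nlinarith
  have h1r' : (1 : ℝ) + r ≠ 0 := by nlinarith
  have hd : (1 : ℝ) - r ^ 2 ≠ 0 := by nlinarith
  field_simp
  ring
end
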